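/- In the hyperbolic two-circle triangle with fixed Θ ∈ (0,π), for every ε > 0 there exists L > 0 such that for all r_j > 0, whenever r_i > L the inner angle θ_i is smaller than ε. -/

import Mathlib

open Real

noncomputable def arcosh (x : ℝ) : ℝ := Real.log (x + Real.sqrt (x ^ 2 - 1))

/-- cosh of the side opposite the apex in the hyperbolic two-circle triangle. -/
noncomputable def hC (Θ ri rj : ℝ) : ℝ :=
  Real.cosh ri * Real.cosh rj + Real.sinh ri * Real.sinh rj * Real.cos Θ

noncomputable def hL (Θ ri rj : ℝ) : ℝ := _root_.arcosh (hC Θ ri rj)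

/-- Inner angle at vertex `i` of the hyperbolic triangle with side lengths `ri, rj`
adjacent to the apex angle `π − Θ`, via the hyperbolic law of cosines. -/
noncomputable def hθi (Θ ri rj : ℝ) : ℝ :=
  Real.arccos ((Real.cosh ri * Real.cosh (hL Θ ri rj) - Real.cosh rj) /
    (Real.sinh ri * Real.sinh (hL Θ ri rj)))

noncomputable def hθj (Θ ri rj : ℝ) : ℝ :=
  Real.arccos ((Real.cosh rj * Real.cosh (hL Θ ri rj) - Real.cosh ri) /
    (Real.sinh rj * Real.sinh (hL Θ ri rj)))

lemma inv_add_sqrt {x : ℝ} (hx : 1 ≤ x) :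
    (x + Real.sqrt (x ^ 2 - 1))⁻¹ = x - Real.sqrt (x ^ 2 - 1) := by
  have hs : 0 ≤ x ^ 2 - 1 := by nlinarith
  have hs2 : Real.sqrt (x ^ 2 - 1) ^ 2 = x ^ 2 - 1 := Real.sq_sqrt hs
  refine inv_eq_of_mul_eq_one_right ?_
  nlinarith [Real.sqrt_nonneg (x ^ 2 - 1)]

lemma cosh_arcosh {x : ℝ} (hx : 1 ≤ x) : Real.cosh (_root_.arcosh x) = x := by
  have ht : 0 < x + Real.sqrt (x ^ 2 - 1) := by
    have := Real.sqrt_nonneg (x ^ 2 - 1); linarith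
  rw [_root_.arcosh, Real.cosh_eq, Real.exp_log ht, ← Real.log_inv, Real.exp_log (by positivity),
    inv_add_sqrt hx]
  ring

lemma sinh_arcosh {x : ℝ} (hx : 1 ≤ x) : Real.sinh (_root_.arcosh x) = Real.sqrt (x ^ 2 - 1) := by
  have ht : 0 < x + Real.sqrt (x ^ 2 - 1) := by
    have := Real.sqrt_nonneg (x ^ 2 - 1); linarith
  rw [_root_.arcosh, Real.sinh_eq, Real.exp_log ht, ← Real.log_inv, Real.exp_log (by positivity),
    inv_add_sqrt hx]
  ring

set_option maxHeartbeats 1000000 in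
theorem hyperbolic_angle_small_for_large_radius
    (Θ : ℝ) (hΘ : Θ ∈ Set.Ioo 0 π) :
    ∀ ε > 0, ∃ L > 0, ∀ ri rj : ℝ, 0 < ri → 0 < rj → ri > L →
      hθi Θ ri rj < ε := by
  obtain ⟨hΘ0, hΘπ⟩ := hΘ
  intro ε hε
  set c := Real.cos Θ with hc
  have hsinΘ : 0 < Real.sin Θ := Real.sin_pos_of_pos_of_lt_pi hΘ0 hΘπ
  have hpyth : Real.sin Θ ^ 2 + Real.cos Θ ^ 2 = 1 := Real.sin_sq_add_cos_sq Θ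
  have hc1 : |c| < 1 := by
    rw [abs_lt]
    constructor <;> nlinarith [sq_nonneg (c - 1), sq_nonneg (c + 1)]
  set k : ℝ := 1 - |c| with hkdef
  have hk : 0 < k := by linarith
  set ε' : ℝ := min (ε / 2) (π / 2) with hε'def
  have hε'pos : 0 < ε' := lt_min (by linarith) (by positivity)
  have hε'le : ε' ≤ π / 2 := min_le_right _ _
  have hε'ε : ε' < ε := lt_of_le_of_lt (min_le_left _ _) (by linarith)
  have hsin : 0 < Real.sin ε' :=
    Real.sin_pos_of_pos_of_lt_pi hε'pos (by linarith [Real.pi_pos])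
  have hcos0 : 0 ≤ Real.cos ε' :=
    Real.cos_nonneg_of_mem_Icc ⟨by linarith, hε'le⟩
  set M : ℝ := Real.cos ε' / Real.sin ε' + 1 with hMdef
  have hM : 0 < M := by positivity
  have hM' : Real.cos ε' < M * Real.sin ε' := by
    have hMs : M * Real.sin ε' = Real.cos ε' + Real.sin ε' := by
      rw [hMdef, add_mul, div_mul_cancel₀ _ hsin.ne', one_mul]
    rw [hMs]; linarith
  refine ⟨Real.arsinh ((M + 1) / k) + 1, ?_, ?_⟩
  · have : 0 ≤ Real.arsinh ((M + 1) / k) := Real.arsinh_nonneg_iff.mpr (by positivity)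
    linarith
  intro ri rj hri hrj hriL
  have hshi : 0 < Real.sinh ri := Real.sinh_pos_iff.mpr hri
  have hshj : 0 < Real.sinh rj := Real.sinh_pos_iff.mpr hrj
  have hchi : 1 ≤ Real.cosh ri := Real.one_le_cosh ri
  have hchj : 1 ≤ Real.cosh rj := Real.one_le_cosh rj
  have hchshi : Real.cosh ri - Real.sinh ri = Real.exp (-ri) := Real.cosh_sub_sinh ri
  have hchshj : Real.cosh rj - Real.sinh rj = Real.exp (-rj) := Real.cosh_sub_sinh rj
  have hexpi : Real.exp (-ri) ≤ 1 := Real.exp_le_one_iff.mpr (by linarith)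
  have hexpj : 0 < Real.exp (-rj) := Real.exp_pos _
  set y : ℝ := hC Θ ri rj with hydef
  have hy1 : 1 ≤ y := by
    have h1 : 1 ≤ Real.cosh (ri - rj) := Real.one_le_cosh _
    have h2 : Real.cosh (ri - rj) = Real.cosh ri * Real.cosh rj - Real.sinh ri * Real.sinh rj :=
      Real.cosh_sub ri rj
    have h3 : -1 ≤ c := Real.neg_one_le_cos Θ
    have : -(Real.sinh ri * Real.sinh rj) ≤ Real.sinh ri * Real.sinh rj * c := by
      have h4 : 0 ≤ Real.sinh ri * Real.sinh rj * (c + 1) :=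
        mul_nonneg (mul_pos hshi hshj).le (by linarith)
      linarith
    rw [hydef, hC]
    rw [h2] at h1
    linarith
  set A : ℝ := Real.sinh ri * Real.cosh rj + c * (Real.cosh ri * Real.sinh rj) with hAdef
  set B2 : ℝ := Real.sinh rj ^ 2 * (1 - c ^ 2) with hB2def
  have hB2nn : 0 ≤ B2 := by
    have hcsq : c ^ 2 ≤ 1 := by
      have h5 := sq_abs c
      nlinarith [abs_nonneg c]
    rw [hB2def]
    exact mul_nonneg (sq_nonneg _) (by linarith)
  have hB2le : B2 ≤ Real.sinh rj ^ 2 := by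
    have h6 : 0 ≤ Real.sinh rj ^ 2 * c ^ 2 := mul_nonneg (sq_nonneg _) (sq_nonneg _)
    rw [hB2def]; linarith
  have hiden : y ^ 2 - 1 = A ^ 2 + B2 := by
    have hi := Real.cosh_sq_sub_sinh_sq ri
    have hj := Real.cosh_sq_sub_sinh_sq rj
    rw [hydef, hC, hAdef, hB2def]
    linear_combination (Real.cosh rj ^ 2 - c ^ 2 * Real.sinh rj ^ 2) * hi + hj
  -- lower bound on sinh ri
  have hsinhL : (M + 1) / k < Real.sinh ri := by
    have h1 : Real.arsinh ((M + 1) / k) < ri := by linarith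
    have := Real.sinh_lt_sinh.mpr h1
    rwa [Real.sinh_arsinh] at this
  have hkshi : M + 1 ≤ (1 - |c|) * Real.sinh ri := by
    have h7 := (div_lt_iff₀ hk).mp hsinhL
    rw [hkdef] at h7
    linarith
  have habs : -|c| ≤ c := neg_abs_le c
  have habs1 : |c| ≤ 1 := hc1.le
  have habs0 : 0 ≤ |c| := abs_nonneg c
  -- key bound A ≥ M * sinh rj
  have hA : M * Real.sinh rj ≤ A := by
    have h1 : Real.sinh ri - |c| * Real.cosh ri ≥ M := by
      have h0 : Real.cosh ri - Real.sinh ri ≤ 1 := by rw [hchshi]; exact hexpi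
      have h0' : 0 ≤ Real.cosh ri - Real.sinh ri := by rw [hchshi]; positivity
      have hprod : |c| * (Real.cosh ri - Real.sinh ri) ≤ 1 * 1 :=
        mul_le_mul habs1 h0 h0' zero_le_one
      nlinarith [hkshi, hprod]
    have h2 : Real.sinh rj * (Real.sinh ri - |c| * Real.cosh ri) ≤ A := by
      rw [hAdef]
      have hchpos : 0 < Real.cosh ri := by linarith
      have t1 : (0:ℝ) ≤ (|c| + c) * Real.cosh ri * Real.sinh rj :=
        mul_nonneg (mul_nonneg (by linarith) hchpos.le) hshj.le
      have t2 : (0:ℝ) ≤ Real.sinh ri * (Real.cosh rj - Real.sinh rj) :=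
        mul_nonneg hshi.le (by linarith)
      nlinarith [t1, t2]
    have h3 := mul_le_mul_of_nonneg_left h1 hshj.le
    linarith
  have hApos : 0 < A := lt_of_lt_of_le (mul_pos hM hshj) hA
  set S : ℝ := Real.sqrt (y ^ 2 - 1) with hSdef
  have hApos2 : 0 < A ^ 2 := pow_pos hApos 2
  have hS2 : S ^ 2 = A ^ 2 + B2 := by
    rw [hSdef, Real.sq_sqrt (by linarith [hiden])]
    exact hiden
  have hSpos : 0 < S := by
    rw [hSdef]
    apply Real.sqrt_pos.mpr
    linarith [hiden]
  -- rewrite the goal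
  have hLcosh : Real.cosh (hL Θ ri rj) = y := by rw [hL]; exact _root_.cosh_arcosh hy1
  have hLsinh : Real.sinh (hL Θ ri rj) = S := by rw [hL]; exact _root_.sinh_arcosh hy1
  have hnum : Real.cosh ri * y - Real.cosh rj = Real.sinh ri * A := by
    have hi := Real.cosh_sq_sub_sinh_sq ri
    rw [hydef, hC, hAdef]
    linear_combination Real.cosh rj * hi
  have harg : (Real.cosh ri * Real.cosh (hL Θ ri rj) - Real.cosh rj) /
      (Real.sinh ri * Real.sinh (hL Θ ri rj)) = A / S := by
    rw [hLcosh, hLsinh, hnum, mul_div_mul_left _ _ hshi.ne']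
  rw [hθi, harg]
  -- cos ε' < A / S
  have hsq : (Real.cos ε' * S) ^ 2 < A ^ 2 := by
    rw [mul_pow, hS2]
    have hA2 : M ^ 2 * Real.sinh rj ^ 2 ≤ A ^ 2 := by
      have h8 := pow_le_pow_left₀ (mul_pos hM hshj).le hA 2
      calc M ^ 2 * Real.sinh rj ^ 2 = (M * Real.sinh rj) ^ 2 := by ring
        _ ≤ A ^ 2 := h8
    have hMs2 : Real.cos ε' ^ 2 < M ^ 2 * Real.sin ε' ^ 2 := by
      have h9 := mul_lt_mul'' hM' hM' hcos0 hcos0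
      calc Real.cos ε' ^ 2 = Real.cos ε' * Real.cos ε' := by ring
        _ < M * Real.sin ε' * (M * Real.sin ε') := h9
        _ = M ^ 2 * Real.sin ε' ^ 2 := by ring
    have hpy : Real.sin ε' ^ 2 + Real.cos ε' ^ 2 = 1 := Real.sin_sq_add_cos_sq ε'
    have t1 : B2 * Real.cos ε' ^ 2 < A ^ 2 * Real.sin ε' ^ 2 := by
      calc B2 * Real.cos ε' ^ 2 ≤ Real.sinh rj ^ 2 * Real.cos ε' ^ 2 :=
            mul_le_mul_of_nonneg_right hB2le (sq_nonneg _)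
        _ < Real.sinh rj ^ 2 * (M ^ 2 * Real.sin ε' ^ 2) :=
            mul_lt_mul_of_pos_left hMs2 (by positivity)
        _ = M ^ 2 * Real.sinh rj ^ 2 * Real.sin ε' ^ 2 := by ring
        _ ≤ A ^ 2 * Real.sin ε' ^ 2 :=
            mul_le_mul_of_nonneg_right hA2 (sq_nonneg _)
    have t2 : A ^ 2 * Real.sin ε' ^ 2 + A ^ 2 * Real.cos ε' ^ 2 = A ^ 2 := by
      rw [← mul_add, hpy, mul_one]
    calc Real.cos ε' ^ 2 * (A ^ 2 + B2)
        = A ^ 2 * Real.cos ε' ^ 2 + B2 * Real.cos ε' ^ 2 := by ring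
      _ < A ^ 2 := by linarith
  have hcosX : Real.cos ε' < A / S := by
    rw [lt_div_iff₀ hSpos]
    exact lt_of_pow_lt_pow_left₀ 2 hApos.le hsq
  have harc : Real.arccos (A / S) ≤ ε' := by
    have h1 : Real.arcsin (Real.cos ε') ≤ Real.arcsin (A / S) :=
      Real.monotone_arcsin hcosX.le
    have h2 : Real.arccos (Real.cos ε') = ε' :=
      Real.arccos_cos hε'pos.le (by linarith [Real.pi_pos])
    calc Real.arccos (A / S) = π / 2 - Real.arcsin (A / S) :=
          Real.arccos_eq_pi_div_two_sub_arcsin _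
      _ ≤ π / 2 - Real.arcsin (Real.cos ε') := by linarith
      _ = Real.arccos (Real.cos ε') := (Real.arccos_eq_pi_div_two_sub_arcsin _).symm
      _ = ε' := h2
  linarith
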